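/- There is no additively stable subset of Φ of cardinality 5. -/
import Mathlib


def Phi : Finset (ℤ × ℤ) := {(1,0),(0,1),(1,-1),(0,-1),(-1,1),(-1,0)}

def addStable (E : Finset (ℤ × ℤ)) : Prop :=
  (AddSubmonoid.closure (E : Set (ℤ × ℤ)) : Set (ℤ × ℤ)) ∩ (Phi : Set (ℤ × ℤ)) = (E : Set (ℤ × ℤ))

lemma key (E : Finset (ℤ × ℤ)) (x a b : ℤ × ℤ) (ha : a ∈ E) (hb : b ∈ E)
    (hab : a + b = x) (hxΦ : x ∈ Phi) (hst : addStable E) : x ∈ E := by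
  have hx : x ∈ AddSubmonoid.closure (E : Set (ℤ × ℤ)) := by
    rw [← hab]
    exact add_mem (AddSubmonoid.subset_closure ha) (AddSubmonoid.subset_closure hb)
  have hmem : x ∈ (E : Set (ℤ × ℤ)) := by
    rw [← hst]
    exact ⟨hx, by exact_mod_cast hxΦ⟩
  exact_mod_cast hmem

theorem stmt_9 : ∀ E : Finset (ℤ × ℤ), E ⊆ Phi → E.card = 5 → ¬ addStable E := by
  intro E hsub hcard hst
  have hΦcard : Phi.card = 6 := by decide
  obtain ⟨x, hxΦ, hxE⟩ : ∃ x ∈ Phi, x ∉ E := by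
    by_contra h
    push_neg at h
    have hle := Finset.card_le_card (fun y hy => h y hy)
    omega
  have hE : E = Phi.erase x := by
    apply Finset.eq_of_subset_of_card_le
    · intro y hy
      exact Finset.mem_erase.2 ⟨fun h => hxE (h ▸ hy), hsub hy⟩
    · rw [Finset.card_erase_of_mem hxΦ, hΦcard, hcard]
  subst hE
  apply hxE
  fin_cases hxΦ
  · exact key _ _ (1,-1) (0,1) (by decide) (by decide) (by decide) (by decide) hst
  · exact key _ _ (1,0) (-1,1) (by decide) (by decide) (by decide) (by decide) hst
  · exact key _ _ (1,0) (0,-1) (by decide) (by decide) (by decide) (by decide) hst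
  · exact key _ _ (1,-1) (-1,0) (by decide) (by decide) (by decide) (by decide) hst
  · exact key _ _ (0,1) (-1,0) (by decide) (by decide) (by decide) (by decide) hst
  · exact key _ _ (-1,1) (0,-1) (by decide) (by decide) (by decide) (by decide) hst
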